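/- arXiv:1410.8440 — 3 statements merged into one kernel-verified Lean document; each statement's English description precedes it below -/
import Mathlib

section
/- Let $n, r, d, g$ be positive integers with $g + 1 \leq n - d - r$, and define $p_Y(g) = \prod_{i=0}^{g-1}(1 - \frac{r}{n-i}) - \prod_{i=0}^{g-1}(1 - \frac{r+d}{n-i})$. Then $p_Y(g) > p_Y(g+1)$ if and only if $\prod_{i=0}^{g-1}\left(1 + \frac{d}{n-d-r-i}\right) > 1 + \frac{d}{r}$. -/
theorem pY_decreasing_iff (n r d g : ℕ) (hn : 0 < n) (hr : 0 < r) (hd : 0 < d)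
    (hg : 0 < g) (hgle : g + 1 ≤ n - d - r) :
    (∏ i ∈ Finset.range g, (1 - (r : ℝ) / ((n : ℝ) - i))
        - ∏ i ∈ Finset.range g, (1 - ((r : ℝ) + d) / ((n : ℝ) - i))
      > ∏ i ∈ Finset.range (g + 1), (1 - (r : ℝ) / ((n : ℝ) - i))
        - ∏ i ∈ Finset.range (g + 1), (1 - ((r : ℝ) + d) / ((n : ℝ) - i)))
    ↔ ∏ i ∈ Finset.range g, (1 + (d : ℝ) / ((n : ℝ) - d - r - i)) > 1 + (d : ℝ) / r := by
  have hn' : g + 1 + d + r ≤ n := by omega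
  have hN : (g : ℝ) + 1 + d + r ≤ (n : ℝ) := by exact_mod_cast hn'
  have hr1 : (1 : ℝ) ≤ r := by exact_mod_cast hr
  have hd1 : (1 : ℝ) ≤ d := by exact_mod_cast hd
  have hr0 : (0 : ℝ) < r := by linarith
  have hNg : (0 : ℝ) < (n : ℝ) - g := by linarith
  have hig : ∀ i ∈ Finset.range g, ((r : ℝ) + d) < (n : ℝ) - i := by
    intro i hi
    simp only [Finset.mem_range] at hi
    have : (i : ℝ) + 1 ≤ g := by exact_mod_cast hi
    linarith
  have hig2 : ∀ i ∈ Finset.range g, (0 : ℝ) < (n : ℝ) - d - r - i := by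
    intro i hi
    simp only [Finset.mem_range] at hi
    have : (i : ℝ) + 1 ≤ g := by exact_mod_cast hi
    linarith
  set A := ∏ i ∈ Finset.range g, (1 - (r : ℝ) / ((n : ℝ) - i)) with hA
  set B := ∏ i ∈ Finset.range g, (1 - ((r : ℝ) + d) / ((n : ℝ) - i)) with hB
  set P := ∏ i ∈ Finset.range g, (1 + (d : ℝ) / ((n : ℝ) - d - r - i)) with hP
  have hBpos : 0 < B := by
    rw [hB]
    apply Finset.prod_pos
    intro i hi
    have h1 := hig i hi
    have h2 : (0 : ℝ) < (n : ℝ) - i := by linarith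
    rw [sub_pos, div_lt_one h2]
    exact h1
  have hAB : A = B * P := by
    rw [hA, hB, hP, ← Finset.prod_mul_distrib]
    apply Finset.prod_congr rfl
    intro i hi
    have h1 := hig i hi
    have h2 : ((n : ℝ) - i) ≠ 0 := by linarith
    have h3 : ((n : ℝ) - d - r - i) ≠ 0 := by have := hig2 i hi; linarith
    field_simp
    ring
  have heq : A - B - (A * (1 - (r : ℝ) / ((n : ℝ) - g)) - B * (1 - ((r : ℝ) + d) / ((n : ℝ) - g)))
      = (A * r - B * (r + d)) / ((n : ℝ) - g) := by
    field_simp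
    ring
  have key : (B * ((r : ℝ) + d) < A * r) ↔ 1 + (d : ℝ) / r < P := by
    rw [hAB, mul_assoc, mul_lt_mul_iff_right₀ hBpos,
      show (1 : ℝ) + (d : ℝ) / r = ((r : ℝ) + d) / r by field_simp,
      div_lt_iff₀ hr0]
  rw [Finset.prod_range_succ, Finset.prod_range_succ, ← hA, ← hB, gt_iff_lt, ← sub_pos, heq,
    lt_div_iff₀ hNg, zero_mul, sub_pos, key, gt_iff_lt]
end

section
/- Let $n, r, d$ be positive integers with $d + r < n$ and let $g_1 = \frac{\ln(1 + d/r)}{\ln(1 + d/(n-d-r))}$. Then for every integer $g$ with $g_1 < g$ and $g + 1 \leq n-d-r$, the probability $p_Y(g) = \prod_{i=0}^{g-1}(1-\frac{r}{n-i}) - \prod_{i=0}^{g-1}(1-\frac{r+d}{n-i})$ satisfies $p_Y(g) > p_Y(g+1)$. -/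
theorem pY_decreasing_above_g1 (n r d : ℕ) (hn : 0 < n) (hr : 0 < r) (hd : 0 < d)
    (hdr : d + r < n) (g : ℕ)
    (hg1 : Real.log (1 + (d : ℝ) / r) / Real.log (1 + (d : ℝ) / ((n : ℝ) - d - r)) < g)
    (hgle : g + 1 ≤ n - d - r) :
    ∏ i ∈ Finset.range g, (1 - (r : ℝ) / ((n : ℝ) - i))
        - ∏ i ∈ Finset.range g, (1 - ((r : ℝ) + d) / ((n : ℝ) - i))
      > ∏ i ∈ Finset.range (g + 1), (1 - (r : ℝ) / ((n : ℝ) - i))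
        - ∏ i ∈ Finset.range (g + 1), (1 - ((r : ℝ) + d) / ((n : ℝ) - i)) := by
  have hdrn : (d : ℝ) + r < n := by exact_mod_cast hdr
  have hM : (0 : ℝ) < (n : ℝ) - d - r := by linarith
  have hgnat : g + 1 + (d + r) ≤ n := by omega
  have hgM : (g : ℝ) + 1 ≤ (n : ℝ) - d - r := by
    have : ((g : ℝ) + 1) + ((d : ℝ) + r) ≤ n := by exact_mod_cast hgnat
    linarith
  have hrR : (0 : ℝ) < r := by exact_mod_cast hr
  have hdR : (0 : ℝ) < d := by exact_mod_cast hd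
  -- bounds on n - i for i ≤ g
  have hni : ∀ i : ℕ, (i : ℝ) ≤ g → (d : ℝ) + r + 1 ≤ (n : ℝ) - i := by
    intro i hi; linarith
  have hxpos : ∀ i : ℕ, (i : ℝ) ≤ g → (0 : ℝ) < (n : ℝ) - i := by
    intro i hi; have := hni i hi; linarith
  -- positivity of the factors
  have hBfac : ∀ i : ℕ, (i : ℝ) ≤ g → (0 : ℝ) < 1 - ((r : ℝ) + d) / ((n : ℝ) - i) := by
    intro i hi
    have h1 := hni i hi
    have h2 := hxpos i hi
    rw [sub_pos, div_lt_one h2]; linarith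
  have hAfac : ∀ i : ℕ, (i : ℝ) ≤ g → (0 : ℝ) < 1 - (r : ℝ) / ((n : ℝ) - i) := by
    intro i hi
    have h1 := hni i hi
    have h2 := hxpos i hi
    rw [sub_pos, div_lt_one h2]; linarith
  -- termwise key inequality
  have key : ∀ i ∈ Finset.range g,
      (1 + (d : ℝ) / ((n : ℝ) - d - r)) * (1 - ((r : ℝ) + d) / ((n : ℝ) - i))
        ≤ 1 - (r : ℝ) / ((n : ℝ) - i) := by
    intro i hi
    have hig : (i : ℝ) ≤ g := by
      have := Finset.mem_range.mp hi; exact_mod_cast this.le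
    have hx : (0 : ℝ) < (n : ℝ) - i := hxpos i hig
    have hxM : (n : ℝ) - i - r - d ≤ (n : ℝ) - d - r := by
      have : (0 : ℝ) ≤ i := i.cast_nonneg; linarith
    have hcleared : (1 + (d : ℝ) / ((n : ℝ) - d - r)) * ((n : ℝ) - i - ((r : ℝ) + d))
        ≤ (n : ℝ) - i - r := by
      have hmul : (d : ℝ) / ((n : ℝ) - d - r) * ((n : ℝ) - i - r - d)
          ≤ (d : ℝ) / ((n : ℝ) - d - r) * ((n : ℝ) - d - r) :=
        mul_le_mul_of_nonneg_left hxM (by positivity)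
      rw [div_mul_cancel₀ _ hM.ne'] at hmul
      nlinarith [hmul]
    calc (1 + (d : ℝ) / ((n : ℝ) - d - r)) * (1 - ((r : ℝ) + d) / ((n : ℝ) - i))
        = (1 + (d : ℝ) / ((n : ℝ) - d - r)) * (((n : ℝ) - i - ((r : ℝ) + d)) / ((n : ℝ) - i)) := by
          rw [one_sub_div hx.ne']
      _ = (1 + (d : ℝ) / ((n : ℝ) - d - r)) * ((n : ℝ) - i - ((r : ℝ) + d)) / ((n : ℝ) - i) := by
          ring
      _ ≤ ((n : ℝ) - i - r) / ((n : ℝ) - i) := by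
          gcongr
      _ = 1 - (r : ℝ) / ((n : ℝ) - i) := by rw [sub_div, div_self hx.ne']
  set A : ℝ := ∏ i ∈ Finset.range g, (1 - (r : ℝ) / ((n : ℝ) - i)) with hA
  set B : ℝ := ∏ i ∈ Finset.range g, (1 - ((r : ℝ) + d) / ((n : ℝ) - i)) with hB
  have hBpos : 0 < B := by
    apply Finset.prod_pos
    intro i hi
    exact hBfac i (by exact_mod_cast (Finset.mem_range.mp hi).le)
  -- product inequality : (1+d/M)^g * B ≤ A
  have hprod : (1 + (d : ℝ) / ((n : ℝ) - d - r)) ^ g * B ≤ A := by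
    have h1 : ∏ i ∈ Finset.range g,
        ((1 + (d : ℝ) / ((n : ℝ) - d - r)) * (1 - ((r : ℝ) + d) / ((n : ℝ) - i))) ≤ A := by
      apply Finset.prod_le_prod
      · intro i hi
        have hig : (i : ℝ) ≤ g := by exact_mod_cast (Finset.mem_range.mp hi).le
        have := hBfac i hig
        positivity
      · exact key
    rwa [Finset.prod_mul_distrib, Finset.prod_const, Finset.card_range] at h1
  -- power inequality : 1 + d/r < (1+d/M)^g
  have hlogM : 0 < Real.log (1 + (d : ℝ) / ((n : ℝ) - d - r)) := by
    apply Real.log_pos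
    have : 0 < (d : ℝ) / ((n : ℝ) - d - r) := by positivity
    linarith
  have hpow : 1 + (d : ℝ) / r < (1 + (d : ℝ) / ((n : ℝ) - d - r)) ^ g := by
    have hlt : Real.log (1 + (d : ℝ) / r)
        < g * Real.log (1 + (d : ℝ) / ((n : ℝ) - d - r)) :=
      (div_lt_iff₀ hlogM).mp hg1
    rw [← Real.log_pow] at hlt
    have h1 : (0 : ℝ) < 1 + (d : ℝ) / r := by positivity
    exact (Real.log_lt_log_iff h1 (by positivity)).mp hlt
  have hAB : (1 + (d : ℝ) / r) * B < A :=
    lt_of_lt_of_le (by nlinarith [hpow, hBpos]) hprod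
  have hkey : B * ((r : ℝ) + d) < A * r := by
    have : (1 + (d : ℝ) / r) * B * r = B * ((r : ℝ) + d) := by
      field_simp
    nlinarith [hAB, hrR]
  -- finish
  rw [Finset.prod_range_succ, Finset.prod_range_succ]
  have hng : (0 : ℝ) < (n : ℝ) - g := by
    have := hxpos g le_rfl; exact this
  have hfrac : B * ((r : ℝ) + d) / ((n : ℝ) - g) < A * r / ((n : ℝ) - g) :=
    (div_lt_div_iff_of_pos_right hng).mpr hkey
  have hexp1 : A * (1 - (r : ℝ) / ((n : ℝ) - g)) = A - A * r / ((n : ℝ) - g) := by ring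
  have hexp2 : B * (1 - ((r : ℝ) + d) / ((n : ℝ) - g)) = B - B * ((r : ℝ) + d) / ((n : ℝ) - g) := by
    ring
  rw [hexp1, hexp2]
  linarith
end

section
/- Let $n, r, d$ be positive integers with $d + r < n$, and let $g_0 = \frac{d + (n-d-r+2)\ln(1 + d/r)}{d + \ln(1 + d/r)}$. Then for every integer $g$ with $1 \leq g < g_0$ and $g \leq n-d-r$, $p_Y(g-1) < p_Y(g)$, where $p_Y(g) = \prod_{i=0}^{g-1}(1-\frac{r}{n-i}) - \prod_{i=0}^{g-1}(1-\frac{r+d}{n-i})$. -/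
theorem pY_increasing_below_g0 (n r d : ℕ) (hn : 0 < n) (hr : 0 < r) (hd : 0 < d)
    (hdr : d + r < n) (g : ℕ) (hg : 1 ≤ g)
    (hg0 : (g : ℝ) < ((d : ℝ) + ((n : ℝ) - d - r + 2) * Real.log (1 + (d : ℝ) / r)) /
        ((d : ℝ) + Real.log (1 + (d : ℝ) / r)))
    (hgle : g ≤ n - d - r) :
    ∏ i ∈ Finset.range (g - 1), (1 - (r : ℝ) / ((n : ℝ) - i))
        - ∏ i ∈ Finset.range (g - 1), (1 - ((r : ℝ) + d) / ((n : ℝ) - i))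
      < ∏ i ∈ Finset.range g, (1 - (r : ℝ) / ((n : ℝ) - i))
        - ∏ i ∈ Finset.range g, (1 - ((r : ℝ) + d) / ((n : ℝ) - i)) := by
  obtain ⟨k, rfl⟩ : ∃ k, g = k + 1 := ⟨g - 1, by omega⟩
  simp only [Nat.add_sub_cancel, Finset.prod_range_succ]
  set L : ℝ := Real.log (1 + (d:ℝ)/r) with hL
  have hrR : (0:ℝ) < r := by exact_mod_cast hr
  have hdR : (0:ℝ) < d := by exact_mod_cast hd
  have hLpos : 0 < L := Real.log_pos (by nlinarith [div_pos hdR hrR])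
  have hnk : (k:ℝ) + 1 + d + r ≤ n := by
    have : k + 1 + d + r ≤ n := by omega
    exact_mod_cast this
  set M : ℝ := (n:ℝ) - d - r - k + 1 with hM
  have hMpos : 0 < M := by simp only [hM]; linarith
  have hkey : (k:ℝ) * d < M * L := by
    have hden : (0:ℝ) < (d:ℝ) + L := by linarith
    have h := (lt_div_iff₀ hden).mp hg0
    push_cast at h
    nlinarith
  set A : ℝ := ∏ i ∈ Finset.range k, (1 - (r : ℝ) / ((n : ℝ) - i)) with hA
  set B : ℝ := ∏ i ∈ Finset.range k, (1 - ((r : ℝ) + d) / ((n : ℝ) - i)) with hB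
  have hfacts : ∀ i ∈ Finset.range k, (r:ℝ) + d < (n:ℝ) - i := by
    intro i hi
    have hik : (i:ℝ) + 1 ≤ k := by exact_mod_cast Finset.mem_range.mp hi
    linarith
  have hBpos : 0 < B := by
    apply Finset.prod_pos
    intro i hi
    have h1 := hfacts i hi
    have h2 : (0:ℝ) < (n:ℝ) - i := by linarith
    have := (div_lt_one h2).mpr h1
    linarith
  set t : ℝ := 1 + (d:ℝ)/M with ht
  have htpos : 0 < t := by positivity
  have hAB : A ≤ B * t ^ k := by
    have hstep : A ≤ ∏ i ∈ Finset.range k, ((1 - ((r : ℝ) + d) / ((n : ℝ) - i)) * t) := by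
      apply Finset.prod_le_prod
      · intro i hi
        have h1 := hfacts i hi
        have h2 : (0:ℝ) < (n:ℝ) - i := by linarith
        have h3 : (r:ℝ)/((n:ℝ)-i) < 1 := (div_lt_one h2).mpr (by linarith)
        linarith
      · intro i hi
        have h1 := hfacts i hi
        have hik : (i:ℝ) + 1 ≤ k := by exact_mod_cast Finset.mem_range.mp hi
        have h2 : (0:ℝ) < (n:ℝ) - i := by linarith
        have hgap : M ≤ (n:ℝ) - i - r - d := by simp only [hM]; linarith
        have h2' : ((n:ℝ) - i) ≠ 0 := ne_of_gt h2
        have hM' : M ≠ 0 := ne_of_gt hMpos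
        have e : (1 - ((r:ℝ)+d)/((n:ℝ)-i)) * t - (1 - (r:ℝ)/((n:ℝ)-i))
            = (d:ℝ) * (((n:ℝ)-i) - M - ((r:ℝ)+d)) / (((n:ℝ)-i) * M) := by
          rw [ht]; field_simp; ring
        have hnn : 0 ≤ (d:ℝ) * (((n:ℝ)-i) - M - ((r:ℝ)+d)) / (((n:ℝ)-i) * M) := by
          apply div_nonneg
          · apply mul_nonneg hdR.le; linarith
          · positivity
        linarith [e ▸ hnn]
    calc A ≤ _ := hstep
      _ = B * t ^ k := by rw [Finset.prod_mul_distrib, Finset.prod_const, Finset.card_range]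
  have ht_exp : t ≤ Real.exp ((d:ℝ)/M) := by
    rw [ht, add_comm]; exact Real.add_one_le_exp _
  have htk : t ^ k ≤ Real.exp ((k:ℝ) * ((d:ℝ)/M)) := by
    rw [Real.exp_nat_mul]
    exact pow_le_pow_left₀ htpos.le ht_exp k
  have hlt : Real.exp ((k:ℝ) * ((d:ℝ)/M)) < 1 + (d:ℝ)/r := by
    rw [← Real.exp_log (show (0:ℝ) < 1 + (d:ℝ)/r by positivity)]
    apply Real.exp_lt_exp.mpr
    rw [mul_div_assoc']
    exact (div_lt_iff₀ hMpos).mpr (by nlinarith)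
  have htk' : t ^ k < 1 + (d:ℝ)/r := lt_of_le_of_lt htk hlt
  have hmain : A * r < B * ((r:ℝ) + d) := by
    have h1 : A * r ≤ B * t ^ k * r := mul_le_mul_of_nonneg_right hAB hrR.le
    have h2 : B * t ^ k * r < B * (1 + (d:ℝ)/r) * r :=
      mul_lt_mul_of_pos_right (mul_lt_mul_of_pos_left htk' hBpos) hrR
    have h3 : B * (1 + (d:ℝ)/r) * r = B * ((r:ℝ) + d) := by field_simp
    linarith
  have hDk : (0:ℝ) < (n:ℝ) - k := by linarith
  have h4 : A * ((r:ℝ)/((n:ℝ)-k)) < B * (((r:ℝ)+d)/((n:ℝ)-k)) := by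
    rw [mul_div_assoc', mul_div_assoc']
    exact (div_lt_div_iff_of_pos_right hDk).mpr hmain
  have e1 : A * (1 - (r:ℝ)/((n:ℝ)-k)) = A - A * ((r:ℝ)/((n:ℝ)-k)) := by ring
  have e2 : B * (1 - ((r:ℝ)+d)/((n:ℝ)-k)) = B - B * (((r:ℝ)+d)/((n:ℝ)-k)) := by ring
  linarith
end
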